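/- arXiv:1509.05792 — 5 statements merged into one kernel-verified Lean document; each statement's English description precedes it below -/
import Mathlib

section
/- Let X be a Banach space, let S : [0,∞) → (X → X) satisfy the semigroup identities S(0) = id and S(t+s) = S(t) ∘ S(s) for all t,s ≥ 0, and let z_e ∈ X be an equilibrium, i.e. S(t) z_e = z_e for all t ≥ 0. Let T : [0,∞) → B(X) be a family of bounded linear operators on X such that: (H1) there exist M ≥ 1 and γ > 0 with ‖T(t)‖ ≤ M e^{−γ t} for all t ≥ 0 (the linearization is exponentially stable); (H2) S(t) is Fréchet differentiable at z_e with derivative T(t), uniformly on compact time intervals, i.e. for every t̄ > 0 and every ε > 0 there exists δ > 0 such that for all τ ∈ [0, t̄] and all z₀ with ‖z₀ − z_e‖ < δ one has ‖S(τ) z₀ − z_e − T(τ)(z₀ − z_e)‖ ≤ ε ‖z₀ − z_e‖. Then z_e is locally exponentially stable for the nonlinear semigroup: there exist C ≥ 1, α > 0 and δ > 0 such that whenever ‖z₀ − z_e‖ < δ, it holds that ‖S(t) z₀ − z_e‖ ≤ C e^{−α t} ‖z₀ − z_e‖ for all t ≥ 0. -/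
/-- Lyapunov's indirect method, stability part: if the nonlinear semigroup `S` is
Fréchet differentiable at the equilibrium `z_e` (uniformly on compact time intervals)
with derivative the exponentially stable linear semigroup `T`, then `z_e` is locally
exponentially stable for `S`. -/
theorem frechet_differentiable_semigroup_exp_stable_linearization_implies_loc_exp_stable
    {X : Type*} [NormedAddCommGroup X] [NormedSpace ℝ X] [CompleteSpace X]
    (S : ℝ → X → X) (T : ℝ → X →L[ℝ] X) (z_e : X)
    (hS0 : S 0 = id)
    (hSsemigroup : ∀ t s : ℝ, 0 ≤ t → 0 ≤ s → S (t + s) = S t ∘ S s)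
    (hEq : ∀ t : ℝ, 0 ≤ t → S t z_e = z_e)
    (hH1 : ∃ M γ : ℝ, 1 ≤ M ∧ 0 < γ ∧
      ∀ t : ℝ, 0 ≤ t → ‖T t‖ ≤ M * Real.exp (-γ * t))
    (hH2 : ∀ tbar : ℝ, 0 < tbar → ∀ ε : ℝ, 0 < ε → ∃ δ : ℝ, 0 < δ ∧
      ∀ τ : ℝ, τ ∈ Set.Icc (0 : ℝ) tbar → ∀ z₀ : X, ‖z₀ - z_e‖ < δ →
        ‖S τ z₀ - z_e - T τ (z₀ - z_e)‖ ≤ ε * ‖z₀ - z_e‖) :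
    ∃ C α δ : ℝ, 1 ≤ C ∧ 0 < α ∧ 0 < δ ∧
      ∀ z₀ : X, ‖z₀ - z_e‖ < δ → ∀ t : ℝ, 0 ≤ t →
        ‖S t z₀ - z_e‖ ≤ C * Real.exp (-α * t) * ‖z₀ - z_e‖ := by
  obtain ⟨M, γ, hM, hγ, hT⟩ := hH1
  set tbar : ℝ := Real.log (4 * M) / γ with htbar_def
  have h4M : (1:ℝ) < 4 * M := by nlinarith
  have h4M0 : (0:ℝ) < 4 * M := by linarith
  have hlog : 0 < Real.log (4 * M) := Real.log_pos h4M
  have htbar : 0 < tbar := div_pos hlog hγ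
  have hexp : Real.exp (-γ * tbar) = 1 / (4 * M) := by
    have : -γ * tbar = -Real.log (4 * M) := by
      rw [htbar_def]; field_simp
    rw [this, Real.exp_neg, Real.exp_log h4M0, one_div]
  obtain ⟨δ, hδ, hclose⟩ := hH2 tbar htbar (1/4) (by norm_num)
  -- Step A: growth bound on [0, tbar]
  have stepA : ∀ τ ∈ Set.Icc (0:ℝ) tbar, ∀ y : X, ‖y - z_e‖ < δ →
      ‖S τ y - z_e‖ ≤ (M + 1/4) * ‖y - z_e‖ := by
    intro τ hτ y hy
    have h1 := hclose τ hτ y hy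
    have h2 : ‖T τ (y - z_e)‖ ≤ M * Real.exp (-γ * τ) * ‖y - z_e‖ := by
      calc ‖T τ (y - z_e)‖ ≤ ‖T τ‖ * ‖y - z_e‖ := (T τ).le_opNorm _
        _ ≤ M * Real.exp (-γ * τ) * ‖y - z_e‖ :=
          mul_le_mul_of_nonneg_right (hT τ hτ.1) (norm_nonneg _)
    have h3 : Real.exp (-γ * τ) ≤ 1 := by
      apply Real.exp_le_one_iff.mpr; nlinarith [hτ.1]
    have h4 : ‖S τ y - z_e‖ ≤ ‖S τ y - z_e - T τ (y - z_e)‖ + ‖T τ (y - z_e)‖ := by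
      have := norm_add_le (S τ y - z_e - T τ (y - z_e)) (T τ (y - z_e))
      simpa using this
    have h5 : M * Real.exp (-γ * τ) ≤ M := mul_le_of_le_one_right (by linarith) h3
    have h6 : M * Real.exp (-γ * τ) * ‖y - z_e‖ ≤ M * ‖y - z_e‖ :=
      mul_le_mul_of_nonneg_right h5 (norm_nonneg _)
    linarith
  -- Step B: contraction at time tbar
  have stepB : ∀ y : X, ‖y - z_e‖ < δ → ‖S tbar y - z_e‖ ≤ (1/2) * ‖y - z_e‖ := by
    intro y hy
    have h1 := hclose tbar ⟨le_of_lt htbar, le_refl _⟩ y hy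
    have h2 : ‖T tbar (y - z_e)‖ ≤ (1/4) * ‖y - z_e‖ := by
      calc ‖T tbar (y - z_e)‖ ≤ ‖T tbar‖ * ‖y - z_e‖ := (T tbar).le_opNorm _
        _ ≤ M * Real.exp (-γ * tbar) * ‖y - z_e‖ :=
          mul_le_mul_of_nonneg_right (hT tbar (le_of_lt htbar)) (norm_nonneg _)
        _ = (1/4) * ‖y - z_e‖ := by rw [hexp]; field_simp
    have h4 : ‖S tbar y - z_e‖ ≤ ‖S tbar y - z_e - T tbar (y - z_e)‖ + ‖T tbar (y - z_e)‖ := by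
      have := norm_add_le (S tbar y - z_e - T tbar (y - z_e)) (T tbar (y - z_e))
      simpa using this
    nlinarith
  -- Iteration
  have iter : ∀ z₀ : X, ‖z₀ - z_e‖ < δ → ∀ n : ℕ,
      ‖S (n * tbar) z₀ - z_e‖ ≤ (1/2)^n * ‖z₀ - z_e‖ := by
    intro z₀ hz₀ n
    induction n with
    | zero => simp [hS0]
    | succ n ih =>
      have hlt : ‖S (n * tbar) z₀ - z_e‖ < δ := by
        have hpow : ((1:ℝ)/2)^n ≤ 1 := by
          apply pow_le_one₀ <;> norm_num
        calc ‖S (n * tbar) z₀ - z_e‖ ≤ (1/2)^n * ‖z₀ - z_e‖ := ih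
          _ ≤ 1 * ‖z₀ - z_e‖ := mul_le_mul_of_nonneg_right hpow (norm_nonneg _)
          _ = ‖z₀ - z_e‖ := one_mul _
          _ < δ := hz₀
      have hdecomp : S ((n+1 : ℕ) * tbar) z₀ = S tbar (S (n * tbar) z₀) := by
        have h := hSsemigroup tbar (n * tbar) (le_of_lt htbar)
          (mul_nonneg (Nat.cast_nonneg n) (le_of_lt htbar))
        have harg : ((n+1 : ℕ) : ℝ) * tbar = tbar + n * tbar := by push_cast; ring
        rw [harg, h]; rfl
      calc ‖S ((n+1 : ℕ) * tbar) z₀ - z_e‖ = ‖S tbar (S (n * tbar) z₀) - z_e‖ := by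
            rw [hdecomp]
        _ ≤ (1/2) * ‖S (n * tbar) z₀ - z_e‖ := stepB _ hlt
        _ ≤ (1/2) * ((1/2)^n * ‖z₀ - z_e‖) := by
            apply mul_le_mul_of_nonneg_left ih; norm_num
        _ = (1/2)^(n+1) * ‖z₀ - z_e‖ := by ring
  -- Conclusion
  refine ⟨2 * M + 1/2, Real.log 2 / tbar, δ, by linarith, div_pos (Real.log_pos one_lt_two) htbar,
    hδ, ?_⟩
  intro z₀ hz₀ t ht
  set n : ℕ := ⌊t / tbar⌋₊ with hn_def
  have hdivnn : 0 ≤ t / tbar := div_nonneg ht (le_of_lt htbar)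
  have hnle : (n : ℝ) * tbar ≤ t := by
    have := Nat.floor_le hdivnn
    calc (n : ℝ) * tbar ≤ (t / tbar) * tbar := by
          apply mul_le_mul_of_nonneg_right this (le_of_lt htbar)
      _ = t := by field_simp
  have hlt' : t < ((n : ℝ) + 1) * tbar := by
    have := Nat.lt_floor_add_one (t / tbar)
    calc t = (t / tbar) * tbar := by field_simp
      _ < ((n : ℝ) + 1) * tbar := by
          apply mul_lt_mul_of_pos_right _ htbar; exact_mod_cast this
  set τ : ℝ := t - n * tbar with hτ_def
  have hτ0 : 0 ≤ τ := by simp [hτ_def]; linarith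
  have hτ1 : τ ≤ tbar := by simp [hτ_def]; nlinarith
  have hdecomp : S t z₀ = S τ (S (n * tbar) z₀) := by
    have h := hSsemigroup τ (n * tbar) hτ0
      (mul_nonneg (Nat.cast_nonneg n) (le_of_lt htbar))
    have harg : t = τ + n * tbar := by rw [hτ_def]; ring
    rw [harg, h]; rfl
  have hin : ‖S (n * tbar) z₀ - z_e‖ < δ := by
    have hpow : ((1:ℝ)/2)^n ≤ 1 := by apply pow_le_one₀ <;> norm_num
    calc ‖S (n * tbar) z₀ - z_e‖ ≤ (1/2)^n * ‖z₀ - z_e‖ := iter z₀ hz₀ n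
      _ ≤ 1 * ‖z₀ - z_e‖ := mul_le_mul_of_nonneg_right hpow (norm_nonneg _)
      _ = ‖z₀ - z_e‖ := one_mul _
      _ < δ := hz₀
  have hbound : ‖S t z₀ - z_e‖ ≤ (M + 1/4) * ((1/2)^n * ‖z₀ - z_e‖) := by
    calc ‖S t z₀ - z_e‖ = ‖S τ (S (n * tbar) z₀) - z_e‖ := by rw [hdecomp]
      _ ≤ (M + 1/4) * ‖S (n * tbar) z₀ - z_e‖ := stepA τ ⟨hτ0, hτ1⟩ _ hin
      _ ≤ (M + 1/4) * ((1/2)^n * ‖z₀ - z_e‖) := by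
          apply mul_le_mul_of_nonneg_left (iter z₀ hz₀ n); linarith
  -- (1/2)^n ≤ 2 * exp(-α t)
  have hpow_exp : ((1:ℝ)/2)^n ≤ 2 * Real.exp (-(Real.log 2 / tbar) * t) := by
    have hαt : (Real.log 2 / tbar) * t ≤ ((n:ℝ) + 1) * Real.log 2 := by
      rw [div_mul_eq_mul_div, div_le_iff₀ htbar]
      nlinarith [Real.log_pos one_lt_two]
    have h1 : Real.exp (-(((n:ℝ)+1) * Real.log 2)) ≤ Real.exp (-(Real.log 2 / tbar) * t) :=
      Real.exp_le_exp.mpr (by linarith)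
    have h2 : Real.exp (-(((n:ℝ)+1) * Real.log 2)) = (1/2)^(n+1) := by
      rw [show -(((n:ℝ)+1) * Real.log 2) = ((n+1 : ℕ) : ℝ) * (-Real.log 2) by push_cast; ring,
        Real.exp_nat_mul, Real.exp_neg, Real.exp_log two_pos]
      norm_num
    have : ((1:ℝ)/2)^(n+1) ≤ Real.exp (-(Real.log 2 / tbar) * t) := by rw [← h2]; exact h1
    calc ((1:ℝ)/2)^n = 2 * (1/2)^(n+1) := by ring
      _ ≤ 2 * Real.exp (-(Real.log 2 / tbar) * t) := by linarith
  calc ‖S t z₀ - z_e‖ ≤ (M + 1/4) * ((1/2)^n * ‖z₀ - z_e‖) := hbound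
    _ ≤ (M + 1/4) * (2 * Real.exp (-(Real.log 2 / tbar) * t) * ‖z₀ - z_e‖) := by
        apply mul_le_mul_of_nonneg_left _ (by linarith)
        exact mul_le_mul_of_nonneg_right hpow_exp (norm_nonneg _)
    _ = (2 * M + 1/2) * Real.exp (-(Real.log 2 / tbar) * t) * ‖z₀ - z_e‖ := by ring
end

section
/- Let X be a Banach space, let S : [0,∞) → (X → X) satisfy S(0) = id and S(t+s) = S(t) ∘ S(s) for all t,s ≥ 0, let z_e be an equilibrium (S(t) z_e = z_e for all t), and let T : [0,∞) → B(X) be a family of bounded linear operators such that S(t) is Fréchet differentiable at z_e with derivative T(t), uniformly in t: for every ε > 0 there exists δ > 0 such that for all t ≥ 0 and all h with ‖h‖ < δ, ‖S(t)(z_e + h) − z_e − T(t) h‖ ≤ ε ‖h‖. If z_e is a locally stable equilibrium of the nonlinear semigroup (for every ε > 0 there exists δ > 0 such that ‖z₀ − z_e‖ < δ implies ‖S(t) z₀ − z_e‖ ≤ ε for all t ≥ 0), then the linearization is stable: for every ε > 0 there exists δ > 0 such that for all t ≥ 0 and all h with ‖h‖ < δ, ‖T(t) h‖ ≤ ε.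 -/
/-- Lyapunov's indirect method, instability part (contrapositive): if the nonlinear
semigroup `S` is Fréchet differentiable at the equilibrium `z_e` with derivative the
linear semigroup `T`, uniformly in time, and `z_e` is a locally stable equilibrium of
`S`, then the linearization `T` is stable. -/
theorem stable_nonlinear_implies_stable_linearization
    {X : Type*} [NormedAddCommGroup X] [NormedSpace ℝ X] [CompleteSpace X]
    (S : ℝ → X → X) (T : ℝ → X →L[ℝ] X) (z_e : X)
    (hS0 : S 0 = id)
    (hSsemigroup : ∀ t s : ℝ, 0 ≤ t → 0 ≤ s → S (t + s) = S t ∘ S s)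
    (hEq : ∀ t : ℝ, 0 ≤ t → S t z_e = z_e)
    (hFrechet : ∀ ε : ℝ, 0 < ε → ∃ δ : ℝ, 0 < δ ∧
      ∀ t : ℝ, 0 ≤ t → ∀ h : X, ‖h‖ < δ →
        ‖S t (z_e + h) - z_e - T t h‖ ≤ ε * ‖h‖)
    (hStable : ∀ ε : ℝ, 0 < ε → ∃ δ : ℝ, 0 < δ ∧
      ∀ z₀ : X, ‖z₀ - z_e‖ < δ → ∀ t : ℝ, 0 ≤ t → ‖S t z₀ - z_e‖ ≤ ε) :
    ∀ ε : ℝ, 0 < ε → ∃ δ : ℝ, 0 < δ ∧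
      ∀ t : ℝ, 0 ≤ t → ∀ h : X, ‖h‖ < δ → ‖T t h‖ ≤ ε := by
  intro ε hε
  obtain ⟨δ₁, hδ₁, hF⟩ := hFrechet 1 one_pos
  obtain ⟨δ₂, hδ₂, hSt⟩ := hStable (ε / 2) (by linarith)
  refine ⟨min (min δ₁ δ₂) (ε / 2), by positivity, fun t ht h hh => ?_⟩
  have hh1 : ‖h‖ < δ₁ := lt_of_lt_of_le hh (le_trans (min_le_left _ _) (min_le_left _ _))
  have hh2 : ‖h‖ < δ₂ := lt_of_lt_of_le hh (le_trans (min_le_left _ _) (min_le_right _ _))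
  have hh3 : ‖h‖ < ε / 2 := lt_of_lt_of_le hh (min_le_right _ _)
  have h1 := hF t ht h hh1
  have h2 := hSt (z_e + h) (by simpa using hh2) t ht
  have : ‖T t h‖ ≤ ‖S t (z_e + h) - z_e‖ + ‖S t (z_e + h) - z_e - T t h‖ := by
    have := norm_sub_norm_le (S t (z_e + h) - z_e) (T t h)
    have h3 : ‖S t (z_e + h) - z_e - (S t (z_e + h) - z_e - T t h)‖ = ‖T t h‖ := by
      congr 1; abel
    calc ‖T t h‖ = ‖S t (z_e + h) - z_e - (S t (z_e + h) - z_e - T t h)‖ := h3.symm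
      _ ≤ ‖S t (z_e + h) - z_e‖ + ‖S t (z_e + h) - z_e - T t h‖ := norm_sub_le _ _
  linarith
end

section
/- For every δ > 0 there exists z₀ ∈ ℓ²(ℕ, ℝ) with 0 < ‖z₀‖_{ℓ²} < δ such that every component of z₀ is an equilibrium of the corresponding scalar equation: −(1/(n+1)) (z₀)_n + (z₀)_n² = 0 for all n ∈ ℕ. (Explicitly, one may take z₀ to be the sequence whose n-th entry is 1/(n+1) and all other entries 0, for n large enough that 1/(n+1) < δ.) Consequently, the zero equilibrium of Zwart's nonlinear system admits nonzero equilibria arbitrarily close to it, and is therefore not asymptotically stable. -/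
/-- Zwart's nonlinear system has nonzero equilibria arbitrarily close to the zero
equilibrium: for every `δ > 0` there is `z₀ ∈ ℓ²(ℕ, ℝ)` with `0 < ‖z₀‖ < δ` all of
whose components satisfy the equilibrium equation `−(1/(n+1)) (z₀)_n + (z₀)_n² = 0`. -/
theorem zwart_nonzero_equilibria_near_zero :
    ∀ δ : ℝ, 0 < δ → ∃ z₀ : lp (fun _ : ℕ => ℝ) 2,
      0 < ‖z₀‖ ∧ ‖z₀‖ < δ ∧
      ∀ n : ℕ, -(1 / ((n : ℝ) + 1)) * z₀ n + (z₀ n) ^ 2 = 0 := by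
  intro δ hδ
  obtain ⟨N, hN⟩ := exists_nat_one_div_lt hδ
  have hNpos : (0 : ℝ) < 1 / ((N : ℝ) + 1) := by positivity
  refine ⟨lp.single 2 N (1 / ((N : ℝ) + 1)), ?_, ?_, ?_⟩
  · have := lp.norm_single (p := 2) (E := fun _ : ℕ => ℝ) (by norm_num)
      N (1 / ((N : ℝ) + 1))
    rw [this]
    rwa [Real.norm_of_nonneg hNpos.le]
  · have := lp.norm_single (p := 2) (E := fun _ : ℕ => ℝ) (by norm_num)
      N (1 / ((N : ℝ) + 1))
    rw [this]
    rwa [Real.norm_of_nonneg hNpos.le]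
  · intro n
    by_cases h : n = N
    · subst h
      rw [lp.single_apply_self]
      ring
    · rw [lp.single_apply_ne _ _ _ h]
      ring
end

section
/- Let Z be a real Hilbert space, let f : Z → Z, let s ⊆ Z, and let K ≥ 0 be such that f is K-Lipschitz on s. Let T > 0 and let y, z : ℝ → Z and g, h : ℝ → Z be such that for every t ∈ [0, T]: y(t) ∈ s, z(t) ∈ s, y is differentiable at t with y'(t) = g(t) + f(y(t)), z is differentiable at t with z'(t) = h(t) + f(z(t)), and ⟨g(t) − h(t), y(t) − z(t)⟩ ≤ 0. Then for every t ∈ [0, T], ‖y(t) − z(t)‖² ≤ e^{2 K t} ‖y(0) − z(0)‖². -/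
open Set Real

/-- Trajectory-divergence estimate for the quasilinear equation `ż = A z + f(z)` with
`A` dissipative: if `f` is `K`-Lipschitz on `s`, `y' = g + f(y)`, `z' = h + f(z)` on
`[0, T]` with `⟨g − h, y − z⟩ ≤ 0`, then `‖y(t) − z(t)‖² ≤ e^{2Kt} ‖y(0) − z(0)‖²`. -/
theorem dissipative_trajectory_divergence_estimate
    {Z : Type*} [NormedAddCommGroup Z] [InnerProductSpace ℝ Z] [CompleteSpace Z]
    (f : Z → Z) (s : Set Z) (K : ℝ) (hK : 0 ≤ K)
    (hLip : ∀ x ∈ s, ∀ y ∈ s, ‖f x - f y‖ ≤ K * ‖x - y‖)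
    (T : ℝ) (hT : 0 < T) (y z g h : ℝ → Z)
    (hy_mem : ∀ t ∈ Set.Icc (0 : ℝ) T, y t ∈ s)
    (hz_mem : ∀ t ∈ Set.Icc (0 : ℝ) T, z t ∈ s)
    (hy' : ∀ t ∈ Set.Icc (0 : ℝ) T, HasDerivAt y (g t + f (y t)) t)
    (hz' : ∀ t ∈ Set.Icc (0 : ℝ) T, HasDerivAt z (h t + f (z t)) t)
    (hdiss : ∀ t ∈ Set.Icc (0 : ℝ) T, inner ℝ (g t - h t) (y t - z t) ≤ (0 : ℝ)) :
    ∀ t ∈ Set.Icc (0 : ℝ) T,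
      ‖y t - z t‖ ^ 2 ≤ Real.exp (2 * K * t) * ‖y 0 - z 0‖ ^ 2 := by
  set u : ℝ → Z := fun t => y t - z t with hu_def
  set w : ℝ → ℝ := fun t => ‖u t‖ ^ 2 with hw_def
  set w' : ℝ → ℝ := fun t => 2 * inner ℝ ((g t + f (y t)) - (h t + f (z t))) (u t) with hw'_def
  have hu : ∀ τ ∈ Set.Icc (0 : ℝ) T,
      HasDerivAt u ((g τ + f (y τ)) - (h τ + f (z τ))) τ :=
    fun τ hτ => (hy' τ hτ).sub (hz' τ hτ)
  have hw : ∀ τ ∈ Set.Icc (0 : ℝ) T, HasDerivAt w (w' τ) τ := by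
    intro τ hτ
    have := ((hu τ hτ).inner ℝ (hu τ hτ))
    have h2 : (inner ℝ (u τ) ((g τ + f (y τ)) - (h τ + f (z τ))) : ℝ)
        + inner ℝ ((g τ + f (y τ)) - (h τ + f (z τ))) (u τ) = w' τ := by
      rw [real_inner_comm]; ring
    rw [h2] at this
    have heq : (fun t => (inner ℝ (u t) (u t) : ℝ)) = w := by
      funext t
      simp [hw_def, real_inner_self_eq_norm_sq]
    rwa [heq] at this
  have hcont : ContinuousOn w (Set.Icc 0 T) :=
    fun τ hτ => ((hw τ hτ).continuousAt).continuousWithinAt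
  have hbound : ∀ τ ∈ Set.Ico (0 : ℝ) T, w' τ ≤ (2 * K) * w τ + 0 := by
    intro τ hτ
    have hτ' : τ ∈ Set.Icc (0 : ℝ) T := Set.mem_Icc_of_Ico hτ
    have hsplit : w' τ = 2 * inner ℝ (g τ - h τ) (u τ)
        + 2 * inner ℝ (f (y τ) - f (z τ)) (u τ) := by
      have : (g τ + f (y τ)) - (h τ + f (z τ)) = (g τ - h τ) + (f (y τ) - f (z τ)) := by
        abel
      rw [hw'_def]
      simp only [this, inner_add_left]
      ring
    have h1 : (2 : ℝ) * inner ℝ (g τ - h τ) (u τ) ≤ 0 := by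
      have := hdiss τ hτ'
      nlinarith
    have h2 : (inner ℝ (f (y τ) - f (z τ)) (u τ) : ℝ) ≤ K * ‖u τ‖ ^ 2 := by
      calc (inner ℝ (f (y τ) - f (z τ)) (u τ) : ℝ)
          ≤ ‖f (y τ) - f (z τ)‖ * ‖u τ‖ := real_inner_le_norm _ _
        _ ≤ (K * ‖u τ‖) * ‖u τ‖ := by
            apply mul_le_mul_of_nonneg_right _ (norm_nonneg _)
            exact hLip _ (hy_mem τ hτ') _ (hz_mem τ hτ')
        _ = K * ‖u τ‖ ^ 2 := by ring
    rw [hsplit]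
    have : w τ = ‖u τ‖ ^ 2 := rfl
    nlinarith
  have hgron := le_gronwallBound_of_liminf_deriv_right_le hcont
    (fun τ hτ r hr =>
      ((hw τ (Set.mem_Icc_of_Ico hτ)).hasDerivWithinAt.liminf_right_slope_le hr))
    (le_refl (w 0)) hbound
  intro t ht
  have := hgron t ht
  rw [sub_zero, gronwallBound_ε0] at this
  calc ‖y t - z t‖ ^ 2 = w t := rfl
    _ ≤ w 0 * Real.exp (2 * K * t) := this
    _ = Real.exp (2 * K * t) * ‖y 0 - z 0‖ ^ 2 := by rw [mul_comm]
end

section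
/- Let Z be a real Hilbert space, and let constants L ≥ 0, c ≥ 0, K and M satisfy 0 ≤ M < K. Let t_f > 0 and let φ : ℝ → Z with φ(0) = 0 be such that for every t ∈ [0, t_f], φ is differentiable at t with φ'(t) = w(t) + B(t)(φ(t)) + r(t), where w(t) ∈ Z satisfies ⟨w(t), φ(t)⟩ ≤ 0, B(t) is a bounded linear operator on Z with ‖B(t)‖ ≤ M, and ‖r(t)‖ ≤ (L/2) c e^{2 K t}. Then for every t ∈ [0, t_f], ‖φ(t)‖ ≤ ( L c / (2 (K − M)) ) ( e^{2 K t_f} − e^{2 M t_f} ). -/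
/-- Quadratic remainder estimate from the proof of Fréchet differentiability of the
semigroup of a quasilinear equation: if `φ(0) = 0` and on `[0, t_f]`
`φ' = w + B φ + r` with `⟨w, φ⟩ ≤ 0`, `‖B(t)‖ ≤ M` and `‖r(t)‖ ≤ (L/2) c e^{2Kt}`,
where `0 ≤ M < K`, then `‖φ(t)‖ ≤ (L c / (2(K − M))) (e^{2K t_f} − e^{2M t_f})`. -/
theorem quadratic_remainder_estimate
    {Z : Type*} [NormedAddCommGroup Z] [InnerProductSpace ℝ Z] [CompleteSpace Z]
    (L c K M : ℝ) (hL : 0 ≤ L) (hc : 0 ≤ c) (hM : 0 ≤ M) (hMK : M < K)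
    (t_f : ℝ) (ht_f : 0 < t_f)
    (φ w r : ℝ → Z) (B : ℝ → Z →L[ℝ] Z) (hφ0 : φ 0 = 0)
    (hφ' : ∀ t ∈ Set.Icc (0 : ℝ) t_f, HasDerivAt φ (w t + B t (φ t) + r t) t)
    (hw : ∀ t ∈ Set.Icc (0 : ℝ) t_f, inner ℝ (w t) (φ t) ≤ (0 : ℝ))
    (hB : ∀ t ∈ Set.Icc (0 : ℝ) t_f, ‖B t‖ ≤ M)
    (hr : ∀ t ∈ Set.Icc (0 : ℝ) t_f, ‖r t‖ ≤ (L / 2) * c * Real.exp (2 * K * t)) :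
    ∀ t ∈ Set.Icc (0 : ℝ) t_f,
      ‖φ t‖ ≤ (L * c / (2 * (K - M))) *
        (Real.exp (2 * K * t_f) - Real.exp (2 * M * t_f)) := by
  classical
  set α : ℝ := L * c / (2 * (K - M)) with hα_def
  have hKM : (0:ℝ) < K - M := sub_pos.2 hMK
  have hα : 0 ≤ α := by positivity
  have hLc : α * (K - M) = L * c / 2 := by
    rw [hα_def]; field_simp
  set u : ℝ → ℝ := fun t => α * (Real.exp (2 * K * t) - Real.exp (2 * M * t)) with hu_def
  -- main comparison: for every δ > 0, ‖φ t‖ ≤ u t + δ exp ((M+1) t) on [0, t_f]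
  have main : ∀ δ > (0:ℝ), ∀ t ∈ Set.Icc (0:ℝ) t_f,
      ‖φ t‖ ≤ u t + δ * Real.exp ((M + 1) * t) := by
    intro δ hδ
    set f' : ℝ → ℝ := fun t =>
      if φ t = 0 then ‖w t + B t (φ t) + r t‖
      else M * ‖φ t‖ + (L / 2) * c * Real.exp (2 * K * t) with hf'_def
    set Bd : ℝ → ℝ := fun t => u t + δ * Real.exp ((M + 1) * t) with hBd_def
    set Bd' : ℝ → ℝ := fun t =>
      α * (Real.exp (2 * K * t) * (2 * K * 1) - Real.exp (2 * M * t) * (2 * M * 1))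
        + δ * (Real.exp ((M + 1) * t) * ((M + 1) * 1)) with hBd'_def
    have hBdDeriv : ∀ x, HasDerivAt Bd (Bd' x) x := by
      intro x
      have h1 : HasDerivAt (fun t => Real.exp (2 * K * t))
          (Real.exp (2 * K * x) * (2 * K * 1)) x :=
        ((hasDerivAt_id x).const_mul (2 * K)).exp
      have h2 : HasDerivAt (fun t => Real.exp (2 * M * t))
          (Real.exp (2 * M * x) * (2 * M * 1)) x :=
        ((hasDerivAt_id x).const_mul (2 * M)).exp
      have h3 : HasDerivAt (fun t => Real.exp ((M + 1) * t))
          (Real.exp ((M + 1) * x) * ((M + 1) * 1)) x :=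
        ((hasDerivAt_id x).const_mul (M + 1)).exp
      exact ((h1.sub h2).const_mul α).add (h3.const_mul δ)
    have hfc : ContinuousOn (fun t => ‖φ t‖) (Set.Icc 0 t_f) :=
      fun t ht => ((hφ' t ht).continuousAt.norm).continuousWithinAt
    have ha : ‖φ 0‖ ≤ Bd 0 := by
      simp only [hBd_def, hu_def, hφ0, norm_zero, mul_zero, Real.exp_zero]
      nlinarith
    have hslope : ∀ x ∈ Set.Ico (0:ℝ) t_f, ∀ ρ, f' x < ρ →
        ∃ᶠ z in nhdsWithin x (Set.Ioi x), slope (fun t => ‖φ t‖) x z < ρ := by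
      intro x hx ρ hρ
      have hxI : x ∈ Set.Icc (0:ℝ) t_f := Set.Ico_subset_Icc_self hx
      have hd := hφ' x hxI
      have hmono : nhdsWithin x (Set.Ioi x) ≤ nhdsWithin x ({x}ᶜ) :=
        nhdsWithin_mono x (fun z hz => ne_of_gt hz)
      by_cases h0 : φ x = 0
      · -- slope of the norm is the norm of the slope here
        have hf'x : f' x = ‖w x + B x (φ x) + r x‖ := by simp [hf'_def, h0]
        have htend : Filter.Tendsto (fun z => ‖slope φ x z‖) (nhdsWithin x ({x}ᶜ))
            (nhds ‖w x + B x (φ x) + r x‖) :=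
          (hasDerivAt_iff_tendsto_slope.1 hd).norm
        have hev : ∀ᶠ z in nhdsWithin x (Set.Ioi x), ‖slope φ x z‖ < ρ :=
          hmono (htend (Iio_mem_nhds (by rw [← hf'x]; exact hρ)))
        have hev2 : ∀ᶠ z in nhdsWithin x (Set.Ioi x),
            slope (fun t => ‖φ t‖) x z < ρ := by
          filter_upwards [hev, self_mem_nhdsWithin] with z hz hz'
          have hzx : (0:ℝ) < z - x := sub_pos.2 hz'
          have : slope (fun t => ‖φ t‖) x z = ‖slope φ x z‖ := by
            rw [slope_def_field]
            simp only [slope, h0, hφ0, vsub_eq_sub, sub_zero, norm_smul, norm_inv,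
              Real.norm_eq_abs, abs_of_pos hzx]
            rw [norm_zero, sub_zero, div_eq_inv_mul]
          rw [this]; exact hz
        exact hev2.frequently
      · -- the norm is differentiable here
        have hf'x : f' x = M * ‖φ x‖ + (L / 2) * c * Real.exp (2 * K * x) := by
          simp [hf'_def, h0]
        have hin : HasDerivAt (fun t => (inner ℝ (φ t) (φ t) : ℝ))
            ((inner ℝ (φ x) (w x + B x (φ x) + r x) : ℝ)
              + (inner ℝ (w x + B x (φ x) + r x) (φ x) : ℝ)) x :=
          by exact HasDerivAt.inner ℝ hd hd
        have hinn : (inner ℝ (φ x) (φ x) : ℝ) ≠ 0 :=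
          fun h => h0 (inner_self_eq_zero.1 h)
        have hs := hin.sqrt hinn
        have hfun : (fun t => Real.sqrt (inner ℝ (φ t) (φ t) : ℝ)) = fun t => ‖φ t‖ := by
          funext t
          rw [real_inner_self_eq_norm_sq, Real.sqrt_sq (norm_nonneg _)]
        rw [hfun] at hs
        set d : ℝ := ((inner ℝ (φ x) (w x + B x (φ x) + r x) : ℝ)
              + (inner ℝ (w x + B x (φ x) + r x) (φ x) : ℝ))
            / (2 * Real.sqrt (inner ℝ (φ x) (φ x) : ℝ)) with hd_def
        have hsqrt : Real.sqrt (inner ℝ (φ x) (φ x) : ℝ) = ‖φ x‖ := by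
          rw [real_inner_self_eq_norm_sq, Real.sqrt_sq (norm_nonneg _)]
        have hnpos : (0:ℝ) < ‖φ x‖ := norm_pos_iff.2 h0
        have hdle : d ≤ f' x := by
          rw [hd_def, hsqrt, hf'x, div_le_iff₀ (by positivity)]
          have hcomm : (inner ℝ (φ x) (w x + B x (φ x) + r x) : ℝ)
              = (inner ℝ (w x + B x (φ x) + r x) (φ x) : ℝ) := real_inner_comm _ _
          have hsplit : (inner ℝ (w x + B x (φ x) + r x) (φ x) : ℝ)
              = (inner ℝ (w x) (φ x) : ℝ) + (inner ℝ (B x (φ x)) (φ x) : ℝ)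
                + (inner ℝ (r x) (φ x) : ℝ) := by
            rw [inner_add_left, inner_add_left]
          have h1 : (inner ℝ (w x) (φ x) : ℝ) ≤ 0 := hw x hxI
          have h2 : (inner ℝ (B x (φ x)) (φ x) : ℝ) ≤ M * (‖φ x‖ * ‖φ x‖) := by
            calc (inner ℝ (B x (φ x)) (φ x) : ℝ) ≤ ‖B x (φ x)‖ * ‖φ x‖ :=
                  real_inner_le_norm _ _
              _ ≤ (M * ‖φ x‖) * ‖φ x‖ := by
                  apply mul_le_mul_of_nonneg_right _ (norm_nonneg _)
                  calc ‖B x (φ x)‖ ≤ ‖B x‖ * ‖φ x‖ := (B x).le_opNorm _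
                    _ ≤ M * ‖φ x‖ :=
                      mul_le_mul_of_nonneg_right (hB x hxI) (norm_nonneg _)
              _ = M * (‖φ x‖ * ‖φ x‖) := by ring
          have h3 : (inner ℝ (r x) (φ x) : ℝ)
              ≤ ((L / 2) * c * Real.exp (2 * K * x)) * ‖φ x‖ := by
            calc (inner ℝ (r x) (φ x) : ℝ) ≤ ‖r x‖ * ‖φ x‖ := real_inner_le_norm _ _
              _ ≤ ((L / 2) * c * Real.exp (2 * K * x)) * ‖φ x‖ :=
                  mul_le_mul_of_nonneg_right (hr x hxI) (norm_nonneg _)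
          nlinarith
        have htend : Filter.Tendsto (slope (fun t => ‖φ t‖) x) (nhdsWithin x ({x}ᶜ))
            (nhds d) := hasDerivAt_iff_tendsto_slope.1 hs
        have hev : ∀ᶠ z in nhdsWithin x (Set.Ioi x),
            slope (fun t => ‖φ t‖) x z < ρ :=
          hmono (htend (Iio_mem_nhds (lt_of_le_of_lt hdle hρ)))
        exact hev.frequently
    have hbound : ∀ x ∈ Set.Ico (0:ℝ) t_f, ‖φ x‖ = Bd x → f' x < Bd' x := by
      intro x hx heq
      have hx0 : 0 ≤ x := hx.1
      have hEK : Real.exp (2 * M * x) ≤ Real.exp (2 * K * x) :=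
        Real.exp_le_exp.2 (by nlinarith)
      have hupos : 0 ≤ u x := by
        have : 0 ≤ Real.exp (2 * K * x) - Real.exp (2 * M * x) := sub_nonneg.2 hEK
        exact mul_nonneg hα this
      have hBdpos : 0 < Bd x := by
        have : 0 < δ * Real.exp ((M + 1) * x) := by positivity
        simp only [hBd_def]; linarith
      have h0 : φ x ≠ 0 := by
        intro h
        rw [h, norm_zero] at heq
        exact absurd heq.symm (ne_of_gt hBdpos)
      have hf'x : f' x = M * ‖φ x‖ + (L / 2) * c * Real.exp (2 * K * x) := by
        simp [hf'_def, h0]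
      rw [hf'x, heq]
      have hkey : M * Real.exp (2 * M * x) ≤ K * Real.exp (2 * K * x) :=
        mul_le_mul hMK.le hEK (Real.exp_pos _).le (le_trans hM hMK.le)
      have hh1 : 0 ≤ α * (K * Real.exp (2 * K * x) - M * Real.exp (2 * M * x)) :=
        mul_nonneg hα (sub_nonneg.2 hkey)
      have hh2 : 0 < δ * Real.exp ((M + 1) * x) := by positivity
      have hLcE : L / 2 * c * Real.exp (2 * K * x)
          = α * (K - M) * Real.exp (2 * K * x) := by rw [hLc]; ring
      simp only [hBd_def, hBd'_def, hu_def]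
      nlinarith [hh1, hh2, hLcE]
    have := image_le_of_liminf_slope_right_lt_deriv_boundary hfc hslope ha hBdDeriv hbound
    intro t ht
    exact this ht
  intro t ht
  have hle_u : ‖φ t‖ ≤ u t := by
    have hE : 0 < Real.exp ((M + 1) * t) := Real.exp_pos _
    refine le_of_forall_pos_le_add ?_
    intro ε hε
    have := main (ε / Real.exp ((M + 1) * t)) (by positivity) t ht
    calc ‖φ t‖ ≤ u t + ε / Real.exp ((M + 1) * t) * Real.exp ((M + 1) * t) := this
      _ = u t + ε := by field_simp
  refine hle_u.trans ?_
  -- u t ≤ α (e^{2K t_f} - e^{2M t_f})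
  have ht0 : 0 ≤ t := ht.1
  have hts : 0 ≤ t_f - t := sub_nonneg.2 ht.2
  have e1 : Real.exp (2 * M * t_f) = Real.exp (2 * M * t) * Real.exp (2 * M * (t_f - t)) := by
    rw [← Real.exp_add]; ring_nf
  have e2 : Real.exp (2 * K * t_f) = Real.exp (2 * K * t) * Real.exp (2 * K * (t_f - t)) := by
    rw [← Real.exp_add]; ring_nf
  have g1 : Real.exp (2 * M * t) ≤ Real.exp (2 * K * t) :=
    Real.exp_le_exp.2 (by nlinarith)
  have g2 : Real.exp (2 * M * (t_f - t)) ≤ Real.exp (2 * K * (t_f - t)) :=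
    Real.exp_le_exp.2 (by nlinarith)
  have g3 : 1 ≤ Real.exp (2 * M * (t_f - t)) :=
    Real.one_le_exp (by positivity)
  have key : Real.exp (2 * K * t) - Real.exp (2 * M * t)
      ≤ Real.exp (2 * K * t_f) - Real.exp (2 * M * t_f) := by
    rw [e1, e2]
    nlinarith [mul_nonneg (sub_nonneg.2 g1) (sub_nonneg.2 g3),
      mul_nonneg (Real.exp_pos (2 * K * t)).le (sub_nonneg.2 g2)]
  exact mul_le_mul_of_nonneg_left key hα
end
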